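/- arXiv:1107.0184 — 2 statements merged into one kernel-verified Lean document; each statement's English description precedes it below -/
import Mathlib

section
/- Let n ≥ 1, ρ : ℝⁿ → (0,∞), c₀ > 0, β > 0 and m = ⌊β⌋ + 1. Let Q_v(x,y) (v > 0, x, y ∈ ℝⁿ) be a measurable family such that for every N > 0 there is C_N with |Q_v(x,y)| ≤ C_N v^{−n} e^{−c₀|x−y|²/v²} (1 + v/ρ(x) + v/ρ(y))^{−N}. Define D_β(t,x,y) = (2(−1)^m e^{−iπ(m−β)})/(Γ(m−β)√π) ∫_0^∞ [∫_0^∞ H_{m−1}((t+s)/(2v)) e^{−(t+s)²/(4v²)} s^{m−β−1} ds] (2v)^{1−m} Q_v(x,y) v^{−2} dv. Then for every N > 0 there exists a constant C (depending on n, N, β, c₀ and the constants C_N) such that |t^β D_β(t,x,y)| ≤ C t^β (|x−y|² + t²)^{−(n+β)/2} (1 + (|x−y|² + t²)^{1/2}/ρ(x) + (|x−y|² + t²)^{1/2}/ρ(y))^{−N} for all x, y ∈ ℝⁿ, t > 0. -/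
open MeasureTheory Metric Set

/-- The (physicists') Hermite polynomial function,
`H_k(r) = (−1)^k e^{r²} (d/dr)^k e^{−r²}`. -/
noncomputable def hermiteH (k : ℕ) (r : ℝ) : ℝ :=
  (-1) ^ k * Real.exp (r ^ 2) * iteratedDeriv k (fun s => Real.exp (-(s ^ 2))) r

/-- The fractional time derivative of order `β` of the subordinated Poisson kernel
built from the family `Q`, following formula (3.12) of the paper. -/
noncomputable def Dbeta (n : ℕ) (β : ℝ) (m : ℕ)
    (Q : ℝ → EuclideanSpace ℝ (Fin n) → EuclideanSpace ℝ (Fin n) → ℝ)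
    (t : ℝ) (x y : EuclideanSpace ℝ (Fin n)) : ℂ :=
  (2 * (-1 : ℂ) ^ m * Complex.exp (-Complex.I * (Real.pi : ℂ) * ((m : ℂ) - (β : ℂ))) /
      ((Real.Gamma ((m : ℝ) - β) : ℂ) * ((Real.sqrt Real.pi : ℝ) : ℂ))) *
    ((∫ v in Ioi (0 : ℝ),
        (∫ s in Ioi (0 : ℝ),
          hermiteH (m - 1) ((t + s) / (2 * v)) * Real.exp (-((t + s) ^ 2) / (4 * v ^ 2)) *
            s ^ ((m : ℝ) - β - 1)) *
        (2 * v) ^ (1 - (m : ℝ)) * Q v x y / v ^ 2 : ℝ) : ℂ)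

private lemma pow_le_factorial_mul_exp (k : ℕ) {z : ℝ} (hz : 0 ≤ z) :
    z ^ k ≤ k.factorial * Real.exp z := by
  have h := Real.sum_le_exp_of_nonneg hz (k + 1)
  have h2 : z ^ k / k.factorial ≤ Real.exp z :=
    le_trans (Finset.single_le_sum (f := fun i => z ^ i / i.factorial)
      (fun i _ => by positivity) (Finset.self_mem_range_succ k)) h
  have hk : (0:ℝ) < k.factorial := by exact_mod_cast k.factorial_pos
  calc z ^ k = z ^ k / k.factorial * k.factorial := by field_simp
  _ ≤ Real.exp z * k.factorial := by gcongr
  _ = k.factorial * Real.exp z := by ring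

private lemma exp_neg_le (k : ℕ) {z : ℝ} (hz : 0 < z) :
    Real.exp (-z) ≤ k.factorial / z ^ k := by
  have h := pow_le_factorial_mul_exp k hz.le
  rw [Real.exp_neg, inv_le_comm₀ (Real.exp_pos z) (by positivity), inv_div]
  rw [div_le_iff₀ (by positivity : (0:ℝ) < (k.factorial:ℝ))]
  linarith [h]

private lemma iteratedDeriv_gauss (k : ℕ) : ∃ p : Polynomial ℝ,
    iteratedDeriv k (fun s : ℝ => Real.exp (-(s ^ 2))) = fun u => p.eval u * Real.exp (-(u ^ 2)) := by
  induction k with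
  | zero => exact ⟨1, by funext u; simp [iteratedDeriv_zero]⟩
  | succ k ih =>
    obtain ⟨p, hp⟩ := ih
    refine ⟨p.derivative - Polynomial.C 2 * Polynomial.X * p, ?_⟩
    funext u
    rw [iteratedDeriv_succ, hp]
    have hg : HasDerivAt (fun s : ℝ => Real.exp (-(s ^ 2))) (Real.exp (-(u ^ 2)) * -(2 * u)) u := by
      have h1 : HasDerivAt (fun s : ℝ => -(s ^ 2)) (-(2 * u)) u := by
        simpa using (hasDerivAt_pow 2 u).fun_neg
      exact h1.exp
    have h := (p.hasDerivAt u).mul hg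
    rw [show (fun u => Polynomial.eval u p * Real.exp (-u ^ 2)) = ((fun x => Polynomial.eval x p) * fun s => Real.exp (-s ^ 2)) from rfl, h.deriv]
    simp only [Polynomial.eval_sub, Polynomial.eval_mul, Polynomial.eval_C, Polynomial.eval_X]
    ring

private lemma abs_pow_le_exp (i : ℕ) (u : ℝ) :
    |u| ^ i ≤ 2 ^ i * i.factorial * Real.exp (u ^ 2 / 2) := by
  have he : (1:ℝ) ≤ Real.exp (u ^ 2 / 2) := Real.one_le_exp (by positivity)
  have hfac : (1:ℝ) ≤ (i.factorial:ℝ) := by exact_mod_cast i.factorial_pos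
  have h2i : (1:ℝ) ≤ 2 ^ i := one_le_pow₀ (by norm_num)
  have hm1 : (1:ℝ) ≤ 2 ^ i * i.factorial := by nlinarith
  rcases le_or_gt |u| 1 with h | h
  · calc |u| ^ i ≤ 1 ^ i := pow_le_pow_left₀ (abs_nonneg u) h i
    _ = 1 := one_pow i
    _ ≤ 2 ^ i * i.factorial * Real.exp (u ^ 2 / 2) := by
        nlinarith [mul_le_mul hm1 he zero_le_one (le_trans zero_le_one hm1)]
  · calc |u| ^ i
        ≤ (u ^ 2 / 2 * 2) ^ i := by
          apply pow_le_pow_left₀ (abs_nonneg u)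
          nlinarith [sq_abs u]
    _ = 2 ^ i * (u ^ 2 / 2) ^ i := by rw [mul_pow]; ring
    _ ≤ 2 ^ i * (i.factorial * Real.exp (u ^ 2 / 2)) := by
        gcongr
        exact pow_le_factorial_mul_exp i (by positivity)
    _ = 2 ^ i * i.factorial * Real.exp (u ^ 2 / 2) := by ring

private lemma poly_le_exp (p : Polynomial ℝ) : ∃ A, 0 < A ∧ ∀ u : ℝ,
    |p.eval u| ≤ A * Real.exp (u ^ 2 / 2) := by
  refine ⟨(∑ i ∈ Finset.range (p.natDegree + 1), |p.coeff i| * 2 ^ i * i.factorial) + 1,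
    by positivity, fun u => ?_⟩
  have h1 : p.eval u = ∑ i ∈ Finset.range (p.natDegree + 1), p.coeff i * u ^ i :=
    p.eval_eq_sum_range u
  have he : (0:ℝ) ≤ Real.exp (u ^ 2 / 2) := (Real.exp_pos _).le
  rw [h1]
  calc |∑ i ∈ Finset.range (p.natDegree + 1), p.coeff i * u ^ i|
      ≤ ∑ i ∈ Finset.range (p.natDegree + 1), |p.coeff i * u ^ i| :=
        Finset.abs_sum_le_sum_abs _ _
    _ = ∑ i ∈ Finset.range (p.natDegree + 1), |p.coeff i| * |u| ^ i := by
        simp [abs_mul, abs_pow]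
    _ ≤ ∑ i ∈ Finset.range (p.natDegree + 1),
          |p.coeff i| * (2 ^ i * i.factorial * Real.exp (u ^ 2 / 2)) :=
        Finset.sum_le_sum fun i _ =>
          mul_le_mul_of_nonneg_left (abs_pow_le_exp i u) (abs_nonneg _)
    _ = (∑ i ∈ Finset.range (p.natDegree + 1), |p.coeff i| * 2 ^ i * i.factorial) *
          Real.exp (u ^ 2 / 2) := by
        rw [Finset.sum_mul]
        exact Finset.sum_congr rfl fun i _ => by ring
    _ ≤ ((∑ i ∈ Finset.range (p.natDegree + 1), |p.coeff i| * 2 ^ i * i.factorial) + 1) *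
          Real.exp (u ^ 2 / 2) := by nlinarith

private lemma hermiteH_bound (k : ℕ) : ∃ A, 0 < A ∧ ∀ u : ℝ,
    |hermiteH k u| * Real.exp (-(u ^ 2)) ≤ A * Real.exp (-(u ^ 2) / 2) := by
  obtain ⟨p, hp⟩ := iteratedDeriv_gauss k
  obtain ⟨A, hA, hA2⟩ := poly_le_exp p
  refine ⟨A, hA, fun u => ?_⟩
  have habs : |hermiteH k u| = |p.eval u| := by
    unfold hermiteH
    rw [hp]
    rw [abs_mul, abs_mul, abs_pow, abs_neg, abs_one, one_pow, one_mul, Real.abs_exp,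
      abs_mul, Real.abs_exp]
    rw [show Real.exp (u ^ 2) * (|p.eval u| * Real.exp (-(u ^ 2)))
        = |p.eval u| * (Real.exp (u ^ 2) * Real.exp (-(u ^ 2))) from by ring,
      ← Real.exp_add]
    simp
  rw [habs]
  calc |p.eval u| * Real.exp (-(u ^ 2))
      ≤ A * Real.exp (u ^ 2 / 2) * Real.exp (-(u ^ 2)) := by
        gcongr
        exact hA2 u
    _ = A * Real.exp (-(u ^ 2) / 2) := by
        rw [mul_assoc, ← Real.exp_add]
        ring_nf

private lemma gauss_rpow_integral {a c : ℝ} (ha : -1 < a) (ha' : a ≤ 0) (hc : 0 < c) :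
    IntegrableOn (fun s => Real.exp (-(s ^ 2) / (8 * c ^ 2)) * s ^ a) (Ioi 0) volume ∧
    ∫ s in Ioi (0:ℝ), Real.exp (-(s ^ 2) / (8 * c ^ 2)) * s ^ a
      ≤ (1 / (a + 1) + 8) * c ^ (a + 1) := by
  have ha1 : (0:ℝ) < a + 1 := by linarith
  set h : ℝ → ℝ := fun s => Real.exp (-(s ^ 2) / (8 * c ^ 2)) * s ^ a with hh
  have hcont : ContinuousOn h (Ioi 0) := by
    apply ContinuousOn.mul
    · exact (Real.continuous_exp.comp ((continuous_pow 2).neg.div_const (8 * c ^ 2))).continuousOn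
    · exact fun s hs => (Real.continuousAt_rpow_const s a (Or.inl (ne_of_gt hs))).continuousWithinAt
  -- piece 1 : on Ioc 0 c
  have hmaj1 : IntegrableOn (fun s : ℝ => s ^ a) (Ioc 0 c) volume :=
    (intervalIntegrable_iff_integrableOn_Ioc_of_le hc.le).mp
      (intervalIntegral.intervalIntegrable_rpow' ha)
  have hb1 : ∀ s ∈ Ioc (0:ℝ) c, h s ≤ s ^ a := by
    intro s hs
    have hs0 : (0:ℝ) < s := hs.1
    have : Real.exp (-(s ^ 2) / (8 * c ^ 2)) ≤ 1 := by
      exact Real.exp_le_one_iff.mpr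
        (div_nonpos_of_nonpos_of_nonneg (neg_nonpos.mpr (by positivity)) (by positivity))
    calc h s ≤ 1 * s ^ a := by
          apply mul_le_mul_of_nonneg_right this (Real.rpow_nonneg hs0.le a)
      _ = s ^ a := one_mul _
  have hint1 : IntegrableOn h (Ioc 0 c) volume := by
    apply Integrable.mono' hmaj1 ((hcont.mono Ioc_subset_Ioi_self).aestronglyMeasurable measurableSet_Ioc)
    filter_upwards [ae_restrict_mem measurableSet_Ioc] with s hs
    have h0 : 0 ≤ h s := mul_nonneg (Real.exp_pos _).le (Real.rpow_nonneg hs.1.le _)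
    rw [Real.norm_eq_abs, abs_of_nonneg h0]
    exact hb1 s hs
  have hI1 : ∫ s in Ioc (0:ℝ) c, h s ≤ 1 / (a + 1) * c ^ (a + 1) := by
    calc ∫ s in Ioc (0:ℝ) c, h s ≤ ∫ s in Ioc (0:ℝ) c, s ^ a :=
          setIntegral_mono_on hint1 hmaj1 measurableSet_Ioc hb1
      _ = ∫ s in (0:ℝ)..c, s ^ a := (intervalIntegral.integral_of_le hc.le).symm
      _ = (c ^ (a + 1) - 0 ^ (a + 1)) / (a + 1) := integral_rpow (Or.inl ha)
      _ = 1 / (a + 1) * c ^ (a + 1) := by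
          rw [Real.zero_rpow (ne_of_gt ha1)]; ring
  -- piece 2 : on Ioi c
  have hmaj2 : IntegrableOn (fun s : ℝ => 8 * c ^ (a + 2) * s ^ (-2 : ℝ)) (Ioi c) volume :=
    (integrableOn_Ioi_rpow_of_lt (by norm_num) hc).const_mul _
  have hb2 : ∀ s ∈ Ioi c, h s ≤ 8 * c ^ (a + 2) * s ^ (-2 : ℝ) := by
    intro s hs
    have hcs : c < s := hs
    have hs0 : (0:ℝ) < s := hc.trans hcs
    have he : Real.exp (-(s ^ 2) / (8 * c ^ 2)) ≤ 8 * c ^ 2 * s ^ (-2 : ℝ) := by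
      have hz : (0:ℝ) < s ^ 2 / (8 * c ^ 2) := by positivity
      have h1 : Real.exp (-(s ^ 2 / (8 * c ^ 2))) ≤ (1:ℕ).factorial / (s ^ 2 / (8 * c ^ 2)) ^ 1 :=
        exp_neg_le 1 hz
      rw [show -(s ^ 2) / (8 * c ^ 2) = -(s ^ 2 / (8 * c ^ 2)) from by ring]
      calc Real.exp (-(s ^ 2 / (8 * c ^ 2)))
          ≤ (1:ℕ).factorial / (s ^ 2 / (8 * c ^ 2)) ^ 1 := h1
        _ = 8 * c ^ 2 / s ^ 2 := by
            rw [pow_one, Nat.factorial_one, Nat.cast_one, one_div_div]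
        _ = 8 * c ^ 2 * s ^ (-2:ℝ) := by
            rw [show ((-2:ℝ)) = -((2:ℕ):ℝ) from by norm_num, Real.rpow_neg hs0.le,
              Real.rpow_natCast]
            ring
    have hsa : s ^ a ≤ c ^ a := Real.rpow_le_rpow_of_nonpos hc hcs.le ha'
    calc h s ≤ (8 * c ^ 2 * s ^ (-2:ℝ)) * c ^ a := by
          apply mul_le_mul he hsa (Real.rpow_nonneg hs0.le a) (by positivity)
      _ = 8 * c ^ (a + 2) * s ^ (-2:ℝ) := by
          rw [show c ^ (a + 2) = c ^ a * c ^ (2:ℕ) from by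
            rw [← Real.rpow_natCast c 2, ← Real.rpow_add hc]; norm_num]
          ring
  have hint2 : IntegrableOn h (Ioi c) volume := by
    apply Integrable.mono' hmaj2
      ((hcont.mono (Ioi_subset_Ioi hc.le)).aestronglyMeasurable measurableSet_Ioi)
    filter_upwards [ae_restrict_mem measurableSet_Ioi] with s hs
    have h0 : 0 ≤ h s :=
      mul_nonneg (Real.exp_pos _).le (Real.rpow_nonneg (hc.trans hs).le _)
    rw [Real.norm_eq_abs, abs_of_nonneg h0]
    exact hb2 s hs
  have hI2 : ∫ s in Ioi c, h s ≤ 8 * c ^ (a + 1) := by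
    calc ∫ s in Ioi c, h s ≤ ∫ s in Ioi c, 8 * c ^ (a + 2) * s ^ (-2:ℝ) :=
          setIntegral_mono_on hint2 hmaj2 measurableSet_Ioi hb2
      _ = 8 * c ^ (a + 2) * ∫ s in Ioi c, s ^ (-2:ℝ) := by
          rw [MeasureTheory.integral_const_mul]
      _ = 8 * c ^ (a + 2) * c ^ (-1:ℝ) := by
          rw [integral_Ioi_rpow_of_lt (by norm_num) hc]; norm_num
      _ = 8 * c ^ (a + 1) := by
          rw [mul_assoc, ← Real.rpow_add hc, show a + 2 + (-1:ℝ) = a + 1 from by ring]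
  -- combine
  have hsplit : Ioi (0:ℝ) = Ioc 0 c ∪ Ioi c := (Ioc_union_Ioi_eq_Ioi hc.le).symm
  have hint : IntegrableOn h (Ioi 0) volume := by
    rw [hsplit]; exact hint1.union hint2
  refine ⟨hint, ?_⟩
  rw [hsplit, setIntegral_union (Ioc_disjoint_Ioi le_rfl) measurableSet_Ioi hint1 hint2]
  calc (∫ s in Ioc (0:ℝ) c, h s) + ∫ s in Ioi c, h s
      ≤ 1 / (a + 1) * c ^ (a + 1) + 8 * c ^ (a + 1) := add_le_add hI1 hI2
    _ = (1 / (a + 1) + 8) * c ^ (a + 1) := by ring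

private lemma inner_bound {K : ℕ} {a A t v : ℝ} (ha : -1 < a) (ha' : a ≤ 0)
    (ht : 0 < t) (hv : 0 < v) (hA : 0 < A)
    (hH : ∀ u : ℝ, |hermiteH K u| * Real.exp (-(u ^ 2)) ≤ A * Real.exp (-(u ^ 2) / 2)) :
    |∫ s in Ioi (0:ℝ),
        hermiteH K ((t + s) / (2 * v)) * Real.exp (-((t + s) ^ 2) / (4 * v ^ 2)) * s ^ a|
      ≤ A * (1 / (a + 1) + 8) * Real.exp (-(t ^ 2) / (8 * v ^ 2)) * v ^ (a + 1) := by
  obtain ⟨hint, hIb⟩ := gauss_rpow_integral ha ha' hv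
  have key : ∀ s ∈ Ioi (0:ℝ),
      ‖hermiteH K ((t + s) / (2 * v)) * Real.exp (-((t + s) ^ 2) / (4 * v ^ 2)) * s ^ a‖
        ≤ (A * Real.exp (-(t ^ 2) / (8 * v ^ 2))) * (Real.exp (-(s ^ 2) / (8 * v ^ 2)) * s ^ a) := by
    intro s hs
    have hs0 : (0:ℝ) < s := hs
    set u : ℝ := (t + s) / (2 * v) with hu
    have hu2 : -((t + s) ^ 2) / (4 * v ^ 2) = -(u ^ 2) := by
      rw [hu, div_pow]
      rw [show ((2:ℝ) * v) ^ 2 = 4 * v ^ 2 from by ring]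
      ring
    have hsa : (0:ℝ) ≤ s ^ a := Real.rpow_nonneg hs0.le a
    have step1 : ‖hermiteH K u * Real.exp (-((t + s) ^ 2) / (4 * v ^ 2)) * s ^ a‖
        = |hermiteH K u| * Real.exp (-(u ^ 2)) * s ^ a := by
      rw [hu2, Real.norm_eq_abs, abs_mul, abs_mul, Real.abs_exp, abs_of_nonneg hsa]
    rw [step1]
    have step2 : |hermiteH K u| * Real.exp (-(u ^ 2)) ≤ A * Real.exp (-(u ^ 2) / 2) := hH u
    have step3 : Real.exp (-(u ^ 2) / 2)
        ≤ Real.exp (-(t ^ 2) / (8 * v ^ 2)) * Real.exp (-(s ^ 2) / (8 * v ^ 2)) := by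
      rw [← Real.exp_add, Real.exp_le_exp, hu, div_pow,
        show ((2:ℝ) * v) ^ 2 = 4 * v ^ 2 from by ring]
      have hnum : -(t + s) ^ 2 ≤ -t ^ 2 + -s ^ 2 := by nlinarith
      calc -((t + s) ^ 2 / (4 * v ^ 2)) / 2
          = (-(t + s) ^ 2) / (8 * v ^ 2) := by ring
        _ ≤ (-t ^ 2 + -s ^ 2) / (8 * v ^ 2) := by gcongr
        _ = -t ^ 2 / (8 * v ^ 2) + -s ^ 2 / (8 * v ^ 2) := by ring
    calc |hermiteH K u| * Real.exp (-(u ^ 2)) * s ^ a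
        ≤ A * Real.exp (-(u ^ 2) / 2) * s ^ a := by gcongr
      _ ≤ A * (Real.exp (-(t ^ 2) / (8 * v ^ 2)) * Real.exp (-(s ^ 2) / (8 * v ^ 2))) * s ^ a := by
          gcongr
      _ = (A * Real.exp (-(t ^ 2) / (8 * v ^ 2))) * (Real.exp (-(s ^ 2) / (8 * v ^ 2)) * s ^ a) := by
          ring
  have h1 : |∫ s in Ioi (0:ℝ),
      hermiteH K ((t + s) / (2 * v)) * Real.exp (-((t + s) ^ 2) / (4 * v ^ 2)) * s ^ a|
      ≤ ∫ s in Ioi (0:ℝ),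
        (A * Real.exp (-(t ^ 2) / (8 * v ^ 2))) * (Real.exp (-(s ^ 2) / (8 * v ^ 2)) * s ^ a) := by
    rw [← Real.norm_eq_abs]
    apply norm_integral_le_of_norm_le (hint.const_mul _)
    filter_upwards [ae_restrict_mem measurableSet_Ioi] with s hs
    exact key s hs
  rw [MeasureTheory.integral_const_mul] at h1
  calc |∫ s in Ioi (0:ℝ),
      hermiteH K ((t + s) / (2 * v)) * Real.exp (-((t + s) ^ 2) / (4 * v ^ 2)) * s ^ a|
      ≤ (A * Real.exp (-(t ^ 2) / (8 * v ^ 2))) *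
          ∫ s in Ioi (0:ℝ), Real.exp (-(s ^ 2) / (8 * v ^ 2)) * s ^ a := h1
    _ ≤ (A * Real.exp (-(t ^ 2) / (8 * v ^ 2))) * ((1 / (a + 1) + 8) * v ^ (a + 1)) := by
        gcongr
    _ = A * (1 / (a + 1) + 8) * Real.exp (-(t ^ 2) / (8 * v ^ 2)) * v ^ (a + 1) := by ring

private lemma weight_swap {v r px py N : ℝ} (hv : 0 < v) (hr : 0 < r) (hx : 0 < px)
    (hy : 0 < py) (hN : 0 ≤ N) :
    (1 + v / px + v / py) ^ (-N) ≤ (1 + r / v) ^ N * (1 + r / px + r / py) ^ (-N) := by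
  have h1 : (0:ℝ) < 1 + v / px + v / py := by positivity
  have h2 : (0:ℝ) < 1 + r / px + r / py := by positivity
  have h3 : (0:ℝ) < 1 + r / v := by positivity
  have key : 1 + r / px + r / py ≤ (1 + r / v) * (1 + v / px + v / py) := by
    have e1 : (1 + r / v) * (1 + v / px + v / py)
        = 1 + v / px + v / py + r / v + r / px + r / py := by
      field_simp
      ring
    rw [e1]
    have b1 : 0 ≤ v / px := by positivity
    have b2 : 0 ≤ v / py := by positivity
    have b3 : 0 ≤ r / v := by positivity
    linarith
  have key2 : (1 + r / px + r / py) ^ N ≤ (1 + r / v) ^ N * (1 + v / px + v / py) ^ N := by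
    rw [← Real.mul_rpow h3.le h1.le]
    exact Real.rpow_le_rpow h2.le key hN
  rw [Real.rpow_neg h1.le, Real.rpow_neg h2.le, ← div_eq_mul_inv, inv_eq_one_div,
    div_le_div_iff₀ (Real.rpow_pos_of_pos h1 N) (Real.rpow_pos_of_pos h2 N), one_mul]
  linarith [key2]

private lemma outer_int {b c' N : ℝ} (hb : 0 < b) (hc' : 0 < c') (hN : 0 < N) :
    ∃ K, 0 < K ∧ ∀ r : ℝ, 0 < r →
      IntegrableOn (fun v => v ^ (-1 - b) * Real.exp (-c' * r ^ 2 / v ^ 2) * (1 + r / v) ^ N)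
        (Ioi 0) volume ∧
      (∫ v in Ioi (0:ℝ), v ^ (-1 - b) * Real.exp (-c' * r ^ 2 / v ^ 2) * (1 + r / v) ^ N)
        ≤ K * r ^ (-b) := by
  set k : ℕ := ⌈N + b⌉₊ + 1 with hk_def
  have hk : N + b + 1 ≤ 2 * k := by
    have h1 : N + b ≤ (⌈N + b⌉₊ : ℝ) := Nat.le_ceil _
    have h2 : (k:ℝ) = (⌈N + b⌉₊ : ℝ) + 1 := by rw [hk_def]; push_cast; ring
    nlinarith
  set e : ℝ := 2 * k - N - 1 - b with he_def
  have he0 : 0 ≤ e := by rw [he_def]; linarith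
  have he1 : (0:ℝ) < e + 1 := by linarith
  refine ⟨2 ^ N / b + (k.factorial / c' ^ k * 2 ^ N) / (e + 1), by positivity, fun r hr => ?_⟩
  set G : ℝ → ℝ := fun v => v ^ (-1 - b) * Real.exp (-c' * r ^ 2 / v ^ 2) * (1 + r / v) ^ N
    with hG_def
  have hGnonneg : ∀ v : ℝ, 0 < v → 0 ≤ G v := by
    intro v hv
    exact mul_nonneg (mul_nonneg (Real.rpow_nonneg hv.le _) (Real.exp_pos _).le)
      (Real.rpow_nonneg (by positivity) _)
  have hGcont : ContinuousOn G (Ioi 0) := by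
    apply ContinuousOn.mul
    apply ContinuousOn.mul
    · exact fun v hv =>
        (Real.continuousAt_rpow_const v _ (Or.inl (ne_of_gt hv))).continuousWithinAt
    · apply Real.continuous_exp.comp_continuousOn
      exact continuousOn_const.div (continuousOn_pow 2) (fun v hv => pow_ne_zero 2 (ne_of_gt hv))
    · apply ContinuousOn.rpow_const
      · exact continuousOn_const.add (continuousOn_const.div continuousOn_id
          (fun v hv => ne_of_gt hv))
      · intro v hv
        left
        have hv0 : (0:ℝ) < v := hv
        have : (0:ℝ) < r / v := div_pos hr hv0
        exact ne_of_gt (by linarith)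
  -- piece on Ioi r
  have hmaj1 : IntegrableOn (fun v : ℝ => 2 ^ N * v ^ (-1 - b)) (Ioi r) volume :=
    (integrableOn_Ioi_rpow_of_lt (by linarith) hr).const_mul _
  have hb1 : ∀ v ∈ Ioi r, G v ≤ 2 ^ N * v ^ (-1 - b) := by
    intro v hv
    have hrv : r < v := hv
    have hv0 : (0:ℝ) < v := hr.trans hrv
    have hexp : Real.exp (-c' * r ^ 2 / v ^ 2) ≤ 1 := by
      apply Real.exp_le_one_iff.mpr
      apply div_nonpos_of_nonpos_of_nonneg _ (by positivity)
      nlinarith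
    have hw : (1 + r / v) ^ N ≤ 2 ^ N := by
      apply Real.rpow_le_rpow (by positivity) _ hN.le
      have : r / v ≤ 1 := (div_le_one hv0).mpr hrv.le
      linarith
    calc G v ≤ v ^ (-1 - b) * 1 * 2 ^ N := by
          apply mul_le_mul (mul_le_mul_of_nonneg_left hexp (Real.rpow_nonneg hv0.le _)) hw
            (Real.rpow_nonneg (by positivity) _)
          positivity
      _ = 2 ^ N * v ^ (-1 - b) := by ring
  have hint1 : IntegrableOn G (Ioi r) volume := by
    apply Integrable.mono' hmaj1
      ((hGcont.mono (Ioi_subset_Ioi hr.le)).aestronglyMeasurable measurableSet_Ioi)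
    filter_upwards [ae_restrict_mem measurableSet_Ioi] with v hv
    rw [Real.norm_eq_abs, abs_of_nonneg (hGnonneg v (hr.trans hv))]
    exact hb1 v hv
  have hI1 : ∫ v in Ioi r, G v ≤ 2 ^ N / b * r ^ (-b) := by
    calc ∫ v in Ioi r, G v ≤ ∫ v in Ioi r, 2 ^ N * v ^ (-1 - b) :=
          setIntegral_mono_on hint1 hmaj1 measurableSet_Ioi hb1
      _ = 2 ^ N * ∫ v in Ioi r, v ^ (-1 - b) := MeasureTheory.integral_const_mul _ _
      _ = 2 ^ N * (-r ^ (-1 - b + 1) / (-1 - b + 1)) := by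
          rw [integral_Ioi_rpow_of_lt (by linarith) hr]
      _ = 2 ^ N / b * r ^ (-b) := by
          rw [show -1 - b + 1 = -b from by ring]
          field_simp
  -- piece on Ioc 0 r
  set M : ℝ := k.factorial / c' ^ k * 2 ^ N * r ^ (N - 2 * k) with hM_def
  have hM : 0 < M := by
    apply mul_pos (mul_pos _ (by positivity)) (Real.rpow_pos_of_pos hr _)
    have : (0:ℝ) < k.factorial := by exact_mod_cast k.factorial_pos
    positivity
  have hmaj2 : IntegrableOn (fun v : ℝ => M * v ^ e) (Ioc 0 r) volume :=
    ((intervalIntegrable_iff_integrableOn_Ioc_of_le hr.le).mp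
      (intervalIntegral.intervalIntegrable_rpow' (by linarith))).const_mul _
  have hb2 : ∀ v ∈ Ioc (0:ℝ) r, G v ≤ M * v ^ e := by
    intro v hv
    have hv0 : (0:ℝ) < v := hv.1
    have hvr : v ≤ r := hv.2
    have hexp : Real.exp (-c' * r ^ 2 / v ^ 2)
        ≤ k.factorial * v ^ ((2 * k : ℕ) : ℝ) / (c' ^ k * r ^ ((2 * k : ℕ) : ℝ)) := by
      have hz : (0:ℝ) < c' * r ^ 2 / v ^ 2 := by positivity
      have h1 := exp_neg_le k hz
      rw [show -c' * r ^ 2 / v ^ 2 = -(c' * r ^ 2 / v ^ 2) from by ring]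
      refine h1.trans (le_of_eq ?_)
      rw [div_pow, mul_pow, ← pow_mul, ← pow_mul, Real.rpow_natCast, Real.rpow_natCast]
      field_simp
    have hw : (1 + r / v) ^ N ≤ 2 ^ N * r ^ N * v ^ (-N) := by
      have h1v : (1:ℝ) ≤ r / v := (one_le_div hv0).mpr hvr
      have : (1 + r / v) ^ N ≤ (2 * (r / v)) ^ N := by
        apply Real.rpow_le_rpow (by positivity) (by linarith) hN.le
      refine this.trans (le_of_eq ?_)
      rw [Real.mul_rpow (by norm_num) (by positivity), Real.div_rpow hr.le hv0.le,
        Real.rpow_neg hv0.le]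
      ring
    calc G v ≤ v ^ (-1 - b) * (k.factorial * v ^ ((2 * k : ℕ) : ℝ) / (c' ^ k * r ^ ((2 * k : ℕ) : ℝ)))
          * (2 ^ N * r ^ N * v ^ (-N)) := by
          apply mul_le_mul (mul_le_mul_of_nonneg_left hexp (Real.rpow_nonneg hv0.le _)) hw
            (Real.rpow_nonneg (by positivity) _)
          have hfa : (0:ℝ) ≤ k.factorial := by positivity
          positivity
      _ = M * v ^ e := by
          rw [hM_def, he_def]
          rw [show (N - 2 * k : ℝ) = N + -((2 * k : ℕ) : ℝ) from by push_cast; ring,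
            Real.rpow_add hr, Real.rpow_neg hr.le]
          rw [show (2 * (k:ℝ) - N - 1 - b : ℝ) = -1 - b + ((2 * k : ℕ) : ℝ) + -N from by
            push_cast; ring,
            Real.rpow_add hv0, Real.rpow_add hv0]
          field_simp
  have hint2 : IntegrableOn G (Ioc 0 r) volume := by
    apply Integrable.mono' hmaj2
      ((hGcont.mono Ioc_subset_Ioi_self).aestronglyMeasurable measurableSet_Ioc)
    filter_upwards [ae_restrict_mem measurableSet_Ioc] with v hv
    rw [Real.norm_eq_abs, abs_of_nonneg (hGnonneg v hv.1)]
    exact hb2 v hv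
  have hI2 : ∫ v in Ioc (0:ℝ) r, G v ≤ (k.factorial / c' ^ k * 2 ^ N) / (e + 1) * r ^ (-b) := by
    calc ∫ v in Ioc (0:ℝ) r, G v ≤ ∫ v in Ioc (0:ℝ) r, M * v ^ e :=
          setIntegral_mono_on hint2 hmaj2 measurableSet_Ioc hb2
      _ = M * ∫ v in Ioc (0:ℝ) r, v ^ e := MeasureTheory.integral_const_mul _ _
      _ = M * ∫ v in (0:ℝ)..r, v ^ e := by rw [intervalIntegral.integral_of_le hr.le]
      _ = M * ((r ^ (e + 1) - 0 ^ (e + 1)) / (e + 1)) := by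
          rw [integral_rpow (Or.inl (by linarith))]
      _ = (k.factorial / c' ^ k * 2 ^ N) / (e + 1) * r ^ (-b) := by
          rw [Real.zero_rpow (ne_of_gt he1), hM_def]
          rw [show (k.factorial : ℝ) / c' ^ k * 2 ^ N * r ^ (N - 2 * (k:ℝ)) *
                ((r ^ (e + 1) - 0) / (e + 1))
              = (k.factorial : ℝ) / c' ^ k * 2 ^ N * (r ^ (N - 2 * (k:ℝ)) * r ^ (e + 1)) / (e + 1)
              from by ring,
            ← Real.rpow_add hr,
            show N - 2 * (k:ℝ) + (e + 1) = -b from by rw [he_def]; ring]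
          ring
  -- combine
  have hsplit : Ioi (0:ℝ) = Ioc 0 r ∪ Ioi r := (Ioc_union_Ioi_eq_Ioi hr.le).symm
  constructor
  · rw [hsplit]; exact hint2.union hint1
  · rw [hsplit, setIntegral_union (Ioc_disjoint_Ioi le_rfl) measurableSet_Ioi hint2 hint1]
    calc (∫ v in Ioc (0:ℝ) r, G v) + ∫ v in Ioi r, G v
        ≤ (k.factorial / c' ^ k * 2 ^ N) / (e + 1) * r ^ (-b) + 2 ^ N / b * r ^ (-b) :=
          add_le_add hI2 hI1
      _ = (2 ^ N / b + (k.factorial / c' ^ k * 2 ^ N) / (e + 1)) * r ^ (-b) := by ring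

theorem stmt_5 (n : ℕ) (hn : 1 ≤ n)
    (ρ : EuclideanSpace ℝ (Fin n) → ℝ) (hρ : ∀ x, 0 < ρ x)
    (c₀ : ℝ) (hc₀ : 0 < c₀) (β : ℝ) (hβ : 0 < β) (m : ℕ) (hm : m = Nat.floor β + 1)
    (Q : ℝ → EuclideanSpace ℝ (Fin n) → EuclideanSpace ℝ (Fin n) → ℝ)
    (hQmeas : Measurable fun p : ℝ × EuclideanSpace ℝ (Fin n) × EuclideanSpace ℝ (Fin n) =>
      Q p.1 p.2.1 p.2.2)
    (hQ : ∀ N > (0 : ℝ), ∃ C_N > (0 : ℝ), ∀ (v : ℝ) (x y : EuclideanSpace ℝ (Fin n)), 0 < v →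
      |Q v x y| ≤ C_N * v ^ (-(n : ℝ)) * Real.exp (-c₀ * dist x y ^ 2 / v ^ 2) *
        (1 + v / ρ x + v / ρ y) ^ (-N)) :
    ∀ N > (0 : ℝ), ∃ C > (0 : ℝ), ∀ (x y : EuclideanSpace ℝ (Fin n)) (t : ℝ), 0 < t →
      t ^ β * ‖Dbeta n β m Q t x y‖
        ≤ C * t ^ β * (dist x y ^ 2 + t ^ 2) ^ (-((n : ℝ) + β) / 2) *
          (1 + Real.sqrt (dist x y ^ 2 + t ^ 2) / ρ x +
            Real.sqrt (dist x y ^ 2 + t ^ 2) / ρ y) ^ (-N) := by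
  intro N hN
  obtain ⟨C_N, hC_N, hQb⟩ := hQ N hN
  obtain ⟨A, hA, hH⟩ := hermiteH_bound (m - 1)
  have hmb : 0 < (m:ℝ) - β := by
    rw [hm]; push_cast
    have := Nat.lt_floor_add_one β; linarith
  have hmb1 : (m:ℝ) - β ≤ 1 := by
    rw [hm]; push_cast
    have := Nat.floor_le hβ.le; linarith
  have ha : -1 < (m:ℝ) - β - 1 := by linarith
  have ha' : (m:ℝ) - β - 1 ≤ 0 := by linarith
  have ha1pos : (0:ℝ) < (m:ℝ) - β - 1 + 1 := by linarith
  set c' : ℝ := min 8⁻¹ c₀ with hc'_def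
  have hc' : 0 < c' := lt_min (by norm_num) hc₀
  have hbpos : (0:ℝ) < β + (n:ℝ) := by positivity
  obtain ⟨K, hK, hKall⟩ := outer_int hbpos hc' hN
  set P : ℝ := ‖(2 * (-1 : ℂ) ^ m *
      Complex.exp (-Complex.I * (Real.pi : ℂ) * ((m : ℂ) - (β : ℂ))) /
      ((Real.Gamma ((m : ℝ) - β) : ℂ) * ((Real.sqrt Real.pi : ℝ) : ℂ)))‖ with hP_def
  have hP : 0 ≤ P := norm_nonneg _
  have h18 : (0:ℝ) < 1 / ((m:ℝ) - β - 1 + 1) + 8 := by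
    have := one_div_pos.mpr ha1pos; linarith
  set K₁ : ℝ := A * (1 / ((m:ℝ) - β - 1 + 1) + 8) * 2 ^ (1 - (m:ℝ)) * C_N with hK1_def
  have hK₁ : 0 < K₁ := by
    exact mul_pos (mul_pos (mul_pos hA h18) (Real.rpow_pos_of_pos two_pos _)) hC_N
  refine ⟨P * K₁ * K + 1, ?_, fun x y t ht => ?_⟩
  · have h := mul_nonneg (mul_nonneg hP hK₁.le) hK.le
    linarith
  set d : ℝ := dist x y with hd_def
  have hd0 : 0 ≤ d := dist_nonneg
  have hdt : (0:ℝ) < d ^ 2 + t ^ 2 := by positivity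
  set r : ℝ := Real.sqrt (d ^ 2 + t ^ 2) with hr_def
  have hr : 0 < r := Real.sqrt_pos.mpr hdt
  have hr2 : r ^ 2 = d ^ 2 + t ^ 2 := Real.sq_sqrt hdt.le
  obtain ⟨hGint, hGbound⟩ := hKall r hr
  have hDnn : (0:ℝ) ≤ 1 + r / ρ x + r / ρ y := by
    have h1 := (div_pos hr (hρ x)).le
    have h2 := (div_pos hr (hρ y)).le
    linarith
  set D : ℝ := (1 + r / ρ x + r / ρ y) ^ (-N) with hD_def
  have hD : 0 ≤ D := Real.rpow_nonneg hDnn _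
  -- exp combination
  have hexp : ∀ v : ℝ, 0 < v →
      Real.exp (-(t ^ 2) / (8 * v ^ 2)) * Real.exp (-c₀ * d ^ 2 / v ^ 2)
        ≤ Real.exp (-c' * r ^ 2 / v ^ 2) := by
    intro v hv
    rw [← Real.exp_add, Real.exp_le_exp, hr2]
    have h1 : c' ≤ 8⁻¹ := min_le_left _ _
    have h2 : c' ≤ c₀ := min_le_right _ _
    rw [show -(t ^ 2) / (8 * v ^ 2) + -c₀ * d ^ 2 / v ^ 2
        = (-(t ^ 2) / 8 + -c₀ * d ^ 2) / v ^ 2 from by ring,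
      show -c' * (d ^ 2 + t ^ 2) / v ^ 2 = (-c' * (d ^ 2 + t ^ 2)) / v ^ 2 from by ring]
    gcongr
    nlinarith [mul_nonneg (sub_nonneg.mpr h2) (sq_nonneg d),
      mul_nonneg (sub_nonneg.mpr h1) (sq_nonneg t)]
  -- power collection
  have hpow : ∀ v : ℝ, 0 < v →
      v ^ ((m:ℝ) - β - 1 + 1) * (2 * v) ^ (1 - (m:ℝ)) * v ^ (-(n:ℝ)) / v ^ 2
        = 2 ^ (1 - (m:ℝ)) * v ^ (-1 - (β + (n:ℝ))) := by
    intro v hv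
    rw [Real.mul_rpow (by norm_num) hv.le]
    rw [show v ^ ((m:ℝ) - β - 1 + 1) * (2 ^ (1 - (m:ℝ)) * v ^ (1 - (m:ℝ))) * v ^ (-(n:ℝ)) / v ^ 2
        = 2 ^ (1 - (m:ℝ)) *
          (v ^ ((m:ℝ) - β - 1 + 1) * v ^ (1 - (m:ℝ)) * v ^ (-(n:ℝ)) / v ^ 2) from by ring]
    congr 1
    rw [← Real.rpow_natCast v 2, ← Real.rpow_add hv, ← Real.rpow_add hv, ← Real.rpow_sub hv]
    congr 1
    push_cast
    ring
  -- Dbeta unfolding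
  set F : ℝ → ℝ := fun v =>
    (∫ s in Ioi (0:ℝ), hermiteH (m - 1) ((t + s) / (2 * v)) *
        Real.exp (-((t + s) ^ 2) / (4 * v ^ 2)) * s ^ ((m:ℝ) - β - 1)) *
      (2 * v) ^ (1 - (m:ℝ)) * Q v x y / v ^ 2 with hF_def
  have hDb : ‖Dbeta n β m Q t x y‖ = P * |∫ v in Ioi (0:ℝ), F v| := by
    simp only [hF_def, hP_def, Dbeta, norm_mul, Complex.norm_real, Real.norm_eq_abs, hd_def]
  -- pointwise bound
  have hptw : ∀ v ∈ Ioi (0:ℝ), ‖F v‖ ≤ (K₁ * D) *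
      (v ^ (-1 - (β + (n:ℝ))) * Real.exp (-c' * r ^ 2 / v ^ 2) * (1 + r / v) ^ N) := by
    intro v hv
    have hv0 : (0:ℝ) < v := hv
    have h2v : (0:ℝ) ≤ (2 * v) ^ (1 - (m:ℝ)) := Real.rpow_nonneg (by linarith) _
    have hinner := inner_bound (K := m - 1) (A := A) ha ha' ht hv0 hA hH
    have hQv := hQb v x y hv0
    have hIbnn : (0:ℝ) ≤ A * (1 / ((m:ℝ) - β - 1 + 1) + 8) *
        Real.exp (-(t ^ 2) / (8 * v ^ 2)) * v ^ ((m:ℝ) - β - 1 + 1) :=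
      mul_nonneg (mul_nonneg (mul_nonneg hA.le h18.le) (Real.exp_pos _).le)
        (Real.rpow_nonneg hv0.le _)
    have hFv : ‖F v‖ = |∫ s in Ioi (0:ℝ), hermiteH (m - 1) ((t + s) / (2 * v)) *
        Real.exp (-((t + s) ^ 2) / (4 * v ^ 2)) * s ^ ((m:ℝ) - β - 1)| *
        (2 * v) ^ (1 - (m:ℝ)) * |Q v x y| / v ^ 2 := by
      rw [hF_def]
      rw [Real.norm_eq_abs, abs_div, abs_mul, abs_mul, abs_of_nonneg h2v,
        abs_of_pos (by positivity : (0:ℝ) < v ^ 2)]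
    rw [hFv]
    calc |∫ s in Ioi (0:ℝ), hermiteH (m - 1) ((t + s) / (2 * v)) *
          Real.exp (-((t + s) ^ 2) / (4 * v ^ 2)) * s ^ ((m:ℝ) - β - 1)| *
          (2 * v) ^ (1 - (m:ℝ)) * |Q v x y| / v ^ 2
        ≤ (A * (1 / ((m:ℝ) - β - 1 + 1) + 8) * Real.exp (-(t ^ 2) / (8 * v ^ 2)) *
            v ^ ((m:ℝ) - β - 1 + 1)) * (2 * v) ^ (1 - (m:ℝ)) *
            (C_N * v ^ (-(n:ℝ)) * Real.exp (-c₀ * d ^ 2 / v ^ 2) *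
              (1 + v / ρ x + v / ρ y) ^ (-N)) / v ^ 2 := by
          gcongr
      _ = (A * (1 / ((m:ℝ) - β - 1 + 1) + 8) * C_N) *
            ((Real.exp (-(t ^ 2) / (8 * v ^ 2)) * Real.exp (-c₀ * d ^ 2 / v ^ 2)) *
             ((1 + v / ρ x + v / ρ y) ^ (-N) *
              (v ^ ((m:ℝ) - β - 1 + 1) * (2 * v) ^ (1 - (m:ℝ)) * v ^ (-(n:ℝ)) / v ^ 2))) := by
          ring
      _ ≤ (A * (1 / ((m:ℝ) - β - 1 + 1) + 8) * C_N) *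
            (Real.exp (-c' * r ^ 2 / v ^ 2) *
             (((1 + r / v) ^ N * D) *
              (v ^ ((m:ℝ) - β - 1 + 1) * (2 * v) ^ (1 - (m:ℝ)) * v ^ (-(n:ℝ)) / v ^ 2))) := by
          have hccc : (0:ℝ) ≤ v ^ ((m:ℝ) - β - 1 + 1) * (2 * v) ^ (1 - (m:ℝ)) *
              v ^ (-(n:ℝ)) / v ^ 2 := by
            apply div_nonneg _ (by positivity)
            exact mul_nonneg (mul_nonneg (Real.rpow_nonneg hv0.le _) h2v)
              (Real.rpow_nonneg hv0.le _)
          apply mul_le_mul_of_nonneg_left _ (by positivity)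
          have wnn : (0:ℝ) ≤ 1 + v / ρ x + v / ρ y := by
            have h1 := (div_pos hv0 (hρ x)).le
            have h2 := (div_pos hv0 (hρ y)).le
            linarith
          apply mul_le_mul (hexp v hv0)
            (mul_le_mul_of_nonneg_right (weight_swap hv0 hr (hρ x) (hρ y) hN.le) hccc)
            (mul_nonneg (Real.rpow_nonneg wnn _) hccc) (Real.exp_pos _).le
      _ = (K₁ * D) *
            (v ^ (-1 - (β + (n:ℝ))) * Real.exp (-c' * r ^ 2 / v ^ 2) * (1 + r / v) ^ N) := by
          rw [hpow v hv0, hK1_def]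
          ring
  -- integrate
  have houter : |∫ v in Ioi (0:ℝ), F v| ≤ (K₁ * D) * (K * r ^ (-(β + (n:ℝ)))) := by
    have h1 : |∫ v in Ioi (0:ℝ), F v| ≤ ∫ v in Ioi (0:ℝ), (K₁ * D) *
        (v ^ (-1 - (β + (n:ℝ))) * Real.exp (-c' * r ^ 2 / v ^ 2) * (1 + r / v) ^ N) := by
      rw [← Real.norm_eq_abs]
      apply norm_integral_le_of_norm_le (hGint.const_mul _)
      filter_upwards [ae_restrict_mem measurableSet_Ioi] with v hv
      exact hptw v hv
    rw [MeasureTheory.integral_const_mul] at h1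
    exact h1.trans (mul_le_mul_of_nonneg_left hGbound (mul_nonneg hK₁.le hD))
  have hXeq : r ^ (-(β + (n:ℝ))) = (d ^ 2 + t ^ 2) ^ (-((n:ℝ) + β) / 2) := by
    rw [hr_def, Real.sqrt_eq_rpow, ← Real.rpow_mul hdt.le]
    congr 1
    ring
  calc t ^ β * ‖Dbeta n β m Q t x y‖
      = t ^ β * (P * |∫ v in Ioi (0:ℝ), F v|) := by rw [hDb]
    _ ≤ t ^ β * (P * ((K₁ * D) * (K * r ^ (-(β + (n:ℝ)))))) := by
        exact mul_le_mul_of_nonneg_left (mul_le_mul_of_nonneg_left houter hP)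
          (Real.rpow_nonneg ht.le β)
    _ = (P * K₁ * K) * t ^ β * r ^ (-(β + (n:ℝ))) * D := by ring
    _ ≤ (P * K₁ * K + 1) * t ^ β * r ^ (-(β + (n:ℝ))) * D := by
        apply mul_le_mul_of_nonneg_right _ hD
        apply mul_le_mul_of_nonneg_right _ (Real.rpow_nonneg hr.le _)
        apply mul_le_mul_of_nonneg_right _ (Real.rpow_nonneg ht.le β)
        linarith
    _ = (P * K₁ * K + 1) * t ^ β * (d ^ 2 + t ^ 2) ^ (-((n:ℝ) + β) / 2) * D := by
        rw [hXeq]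
end

section
/- Let n ≥ 1, β > 0 and let K_t(x,z) (t > 0, x, z ∈ ℝⁿ) be a measurable family of kernels satisfying |K_t(x,z)| ≤ C₀ t^β (t + |x−z|)^{−(n+β)}. Let f be locally integrable on ℝⁿ with classical BMO constant M, i.e., |B|⁻¹ ∫_B |f − f_B| ≤ M for every ball B. Then there exists a constant C (depending only on n, β, C₀) such that for every ball B = B(x₀,r), every x ∈ B and every t > 0: ∫_{ℝⁿ ∖ 2B} |K_t(x,z)| |f(z) − f_B| dz ≤ C (t/r)^β M. -/
open MeasureTheory Metric Set

/-- The average of `f` over the ball `B(x,r)`. -/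
noncomputable def avgBall (n : ℕ) (f : EuclideanSpace ℝ (Fin n) → ℝ)
    (x : EuclideanSpace ℝ (Fin n)) (r : ℝ) : ℝ :=
  ((volume (ball x r)).toReal)⁻¹ * ∫ y in ball x r, f y

section Aux

variable {n : ℕ}

lemma volBall_toReal (hn : 1 ≤ n) (x : EuclideanSpace ℝ (Fin n)) {s : ℝ} (hs : 0 ≤ s) :
    (volume (ball x s)).toReal
      = s ^ n * (volume (ball (0 : EuclideanSpace ℝ (Fin n)) 1)).toReal := by
  haveI : Nonempty (Fin n) := Fin.pos_iff_nonempty.mp hn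
  haveI : Nontrivial (EuclideanSpace ℝ (Fin n)) :=
    ⟨EuclideanSpace.single (Classical.arbitrary (Fin n)) (1 : ℝ), 0, by
      intro h
      have := congrArg (· (Classical.arbitrary (Fin n))) h
      simp [EuclideanSpace.single] at this⟩
  rw [Measure.addHaar_ball volume x hs, finrank_euclideanSpace_fin,
    ENNReal.toReal_mul, ENNReal.toReal_ofReal (pow_nonneg hs n)]

lemma kappa_pos (hn : 1 ≤ n) :
    0 < (volume (ball (0 : EuclideanSpace ℝ (Fin n)) 1)).toReal :=
  ENNReal.toReal_pos (measure_ball_pos _ _ one_pos).ne' measure_ball_lt_top.ne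

lemma volBall_pos (hn : 1 ≤ n) (x : EuclideanSpace ℝ (Fin n)) {s : ℝ} (hs : 0 < s) :
    0 < (volume (ball x s)).toReal := by
  rw [volBall_toReal hn x hs.le]
  exact mul_pos (pow_pos hs n) (kappa_pos hn)

lemma absIntegrableOn {f : EuclideanSpace ℝ (Fin n) → ℝ}
    (hf : LocallyIntegrable f volume) (c : ℝ) (x : EuclideanSpace ℝ (Fin n)) (R : ℝ) :
    IntegrableOn (fun z => |f z - c|) (ball x R) volume := by
  have h1 : IntegrableOn f (ball x R) volume :=
    (hf.integrableOn_isCompact (isCompact_closedBall x R)).mono_set ball_subset_closedBall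
  exact (h1.sub (integrableOn_const measure_ball_lt_top.ne)).abs

lemma avg_sub_le {f : EuclideanSpace ℝ (Fin n) → ℝ}
    (hn : 1 ≤ n) (hf : LocallyIntegrable f volume)
    (x : EuclideanSpace ℝ (Fin n)) {s : ℝ} (hs : 0 < s) (c : ℝ) :
    |avgBall n f x s - c|
      ≤ ((volume (ball x s)).toReal)⁻¹ * ∫ y in ball x s, |f y - c| := by
  have hV : 0 < (volume (ball x s)).toReal := volBall_pos hn x hs
  have hfi : IntegrableOn f (ball x s) volume :=
    (hf.integrableOn_isCompact (isCompact_closedBall x s)).mono_set ball_subset_closedBall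
  have hci : IntegrableOn (fun _ => c) (ball x s) volume :=
    integrableOn_const measure_ball_lt_top.ne
  have key : avgBall n f x s - c
      = ((volume (ball x s)).toReal)⁻¹ * ∫ y in ball x s, (f y - c) := by
    rw [integral_sub hfi hci, setIntegral_const, smul_eq_mul, mul_sub, avgBall]
    field_simp
    rw [measureReal_def]; ring
  rw [key]
  rw [abs_mul, abs_of_nonneg (inv_nonneg.mpr hV.le)]
  refine mul_le_mul_of_nonneg_left ?_ (inv_nonneg.mpr hV.le)
  simpa [Real.norm_eq_abs] using
    norm_integral_le_integral_norm (μ := volume.restrict (ball x s)) (fun y => f y - c)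

lemma avg_doubling {f : EuclideanSpace ℝ (Fin n) → ℝ} {M : ℝ}
    (hn : 1 ≤ n) (hf : LocallyIntegrable f volume)
    (hBMO : ∀ (x : EuclideanSpace ℝ (Fin n)) (r : ℝ), 0 < r →
      ((volume (ball x r)).toReal)⁻¹ * ∫ y in ball x r, |f y - avgBall n f x r| ≤ M)
    (x : EuclideanSpace ℝ (Fin n)) {s : ℝ} (hs : 0 < s) :
    |avgBall n f x (2 * s) - avgBall n f x s| ≤ 2 ^ n * M := by
  have hV : 0 < (volume (ball x s)).toReal := volBall_pos hn x hs
  have hV2 : 0 < (volume (ball x (2 * s))).toReal := volBall_pos hn x (by linarith)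
  set c₂ := avgBall n f x (2 * s) with hc₂
  have h1 : |avgBall n f x s - c₂|
      ≤ ((volume (ball x s)).toReal)⁻¹ * ∫ y in ball x s, |f y - c₂| :=
    avg_sub_le hn hf x hs c₂
  have h2 : (∫ y in ball x s, |f y - c₂|) ≤ ∫ y in ball x (2 * s), |f y - c₂| := by
    refine setIntegral_mono_set (absIntegrableOn hf c₂ x (2 * s))
      (Filter.Eventually.of_forall fun y => abs_nonneg _) ?_
    exact HasSubset.Subset.eventuallyLE (ball_subset_ball (by linarith))
  have h3 : (∫ y in ball x (2 * s), |f y - c₂|) ≤ (volume (ball x (2 * s))).toReal * M := by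
    have := hBMO x (2 * s) (by linarith)
    rw [← hc₂] at this
    calc (∫ y in ball x (2 * s), |f y - c₂|)
        = (volume (ball x (2 * s))).toReal *
          (((volume (ball x (2 * s))).toReal)⁻¹ * ∫ y in ball x (2 * s), |f y - c₂|) := by
          field_simp
      _ ≤ (volume (ball x (2 * s))).toReal * M := by gcongr
  have hratio : ((volume (ball x s)).toReal)⁻¹ * (volume (ball x (2 * s))).toReal
      = 2 ^ n := by
    rw [volBall_toReal hn x hs.le, volBall_toReal hn x (by linarith : (0:ℝ) ≤ 2 * s),
      mul_pow]
    have hκ := kappa_pos (n := n) hn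
    field_simp
  rw [abs_sub_comm]
  calc |avgBall n f x s - c₂|
      ≤ ((volume (ball x s)).toReal)⁻¹ * ∫ y in ball x s, |f y - c₂| := h1
    _ ≤ ((volume (ball x s)).toReal)⁻¹ * ((volume (ball x (2 * s))).toReal * M) :=
        mul_le_mul_of_nonneg_left (h2.trans h3) (inv_nonneg.mpr hV.le)
    _ = 2 ^ n * M := by rw [← mul_assoc, hratio]

lemma avg_iter {f : EuclideanSpace ℝ (Fin n) → ℝ} {M : ℝ}
    (hn : 1 ≤ n) (hf : LocallyIntegrable f volume)
    (hBMO : ∀ (x : EuclideanSpace ℝ (Fin n)) (r : ℝ), 0 < r →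
      ((volume (ball x r)).toReal)⁻¹ * ∫ y in ball x r, |f y - avgBall n f x r| ≤ M)
    (x : EuclideanSpace ℝ (Fin n)) {s : ℝ} (hs : 0 < s) (j : ℕ) :
    |avgBall n f x (2 ^ j * s) - avgBall n f x s| ≤ j * (2 ^ n * M) := by
  induction j with
  | zero => simp
  | succ j ih =>
    have h2 : (2 : ℝ) ^ (j + 1) * s = 2 * (2 ^ j * s) := by ring
    have hstep : |avgBall n f x (2 * (2 ^ j * s)) - avgBall n f x (2 ^ j * s)| ≤ 2 ^ n * M :=
      avg_doubling hn hf hBMO x (by positivity)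
    calc |avgBall n f x (2 ^ (j + 1) * s) - avgBall n f x s|
        ≤ |avgBall n f x (2 * (2 ^ j * s)) - avgBall n f x (2 ^ j * s)|
          + |avgBall n f x (2 ^ j * s) - avgBall n f x s| := by
          rw [h2]; exact abs_sub_le _ _ _
      _ ≤ 2 ^ n * M + j * (2 ^ n * M) := add_le_add hstep ih
      _ = (j + 1 : ℕ) * (2 ^ n * M) := by push_cast; ring

lemma int_bound {f : EuclideanSpace ℝ (Fin n) → ℝ} {M : ℝ}
    (hn : 1 ≤ n) (hf : LocallyIntegrable f volume) (hM : 0 ≤ M)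
    (hBMO : ∀ (x : EuclideanSpace ℝ (Fin n)) (r : ℝ), 0 < r →
      ((volume (ball x r)).toReal)⁻¹ * ∫ y in ball x r, |f y - avgBall n f x r| ≤ M)
    (x : EuclideanSpace ℝ (Fin n)) {s : ℝ} (hs : 0 < s) (j : ℕ) :
    (∫ z in ball x (2 ^ j * s), |f z - avgBall n f x s|)
      ≤ (2 ^ j * s) ^ n * (volume (ball (0 : EuclideanSpace ℝ (Fin n)) 1)).toReal
        * ((1 + j * 2 ^ n) * M) := by
  set sj : ℝ := 2 ^ j * s with hsj
  have hsjpos : 0 < sj := by positivity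
  set cj := avgBall n f x sj with hcj
  set c := avgBall n f x s with hc
  have hVj : 0 < (volume (ball x sj)).toReal := volBall_pos hn x hsjpos
  have hpt : ∀ z, |f z - c| ≤ |f z - cj| + |cj - c| := by
    intro z
    calc |f z - c| = |(f z - cj) + (cj - c)| := by ring_nf
      _ ≤ |f z - cj| + |cj - c| := abs_add_le _ _
  have hint1 : IntegrableOn (fun z => |f z - cj|) (ball x sj) volume :=
    absIntegrableOn hf cj x sj
  have hintc : IntegrableOn (fun _ => |cj - c|) (ball x sj) volume :=
    integrableOn_const measure_ball_lt_top.ne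
  have h1 : (∫ z in ball x sj, |f z - c|)
      ≤ ∫ z in ball x sj, (|f z - cj| + |cj - c|) := by
    refine setIntegral_mono_on (absIntegrableOn hf c x sj) (hint1.add hintc)
      measurableSet_ball fun z _ => hpt z
  have h2 : (∫ z in ball x sj, |f z - cj|) ≤ (volume (ball x sj)).toReal * M := by
    have := hBMO x sj hsjpos
    rw [← hcj] at this
    calc (∫ z in ball x sj, |f z - cj|)
        = (volume (ball x sj)).toReal *
          (((volume (ball x sj)).toReal)⁻¹ * ∫ z in ball x sj, |f z - cj|) := by field_simp
      _ ≤ (volume (ball x sj)).toReal * M := by gcongr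
  have h3 : |cj - c| ≤ j * (2 ^ n * M) := avg_iter hn hf hBMO x hs j
  have h4 : (∫ z in ball x sj, (|f z - cj| + |cj - c|))
      = (∫ z in ball x sj, |f z - cj|) + (volume (ball x sj)).toReal * |cj - c| := by
    rw [integral_add hint1 hintc, setIntegral_const, smul_eq_mul, measureReal_def]
  have hvol : (volume (ball x sj)).toReal
      = sj ^ n * (volume (ball (0 : EuclideanSpace ℝ (Fin n)) 1)).toReal :=
    volBall_toReal hn x hsjpos.le
  calc (∫ z in ball x sj, |f z - c|)
      ≤ (∫ z in ball x sj, |f z - cj|) + (volume (ball x sj)).toReal * |cj - c| := by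
        rw [← h4]; exact h1
    _ ≤ (volume (ball x sj)).toReal * M
        + (volume (ball x sj)).toReal * (j * (2 ^ n * M)) :=
        add_le_add h2 (mul_le_mul_of_nonneg_left h3 hVj.le)
    _ = (volume (ball x sj)).toReal * ((1 + j * 2 ^ n) * M) := by ring
    _ = sj ^ n * (volume (ball (0 : EuclideanSpace ℝ (Fin n)) 1)).toReal
        * ((1 + j * 2 ^ n) * M) := by rw [hvol]

end Aux

theorem stmt_16 (n : ℕ) (hn : 1 ≤ n) (β : ℝ) (hβ : 0 < β)
    (K : ℝ → EuclideanSpace ℝ (Fin n) → EuclideanSpace ℝ (Fin n) → ℝ)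
    (hKmeas : Measurable fun p : ℝ × EuclideanSpace ℝ (Fin n) × EuclideanSpace ℝ (Fin n) =>
      K p.1 p.2.1 p.2.2)
    (C₀ : ℝ) (hC₀ : 0 < C₀)
    (hKsize : ∀ (t : ℝ) (x z : EuclideanSpace ℝ (Fin n)), 0 < t →
      |K t x z| ≤ C₀ * t ^ β * (t + dist x z) ^ (-((n : ℝ) + β)))
    (f : EuclideanSpace ℝ (Fin n) → ℝ) (hf : LocallyIntegrable f volume)
    (M : ℝ) (hM : 0 ≤ M)
    (hBMO : ∀ (x : EuclideanSpace ℝ (Fin n)) (r : ℝ), 0 < r →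
      ((volume (ball x r)).toReal)⁻¹ * ∫ y in ball x r, |f y - avgBall n f x r| ≤ M) :
    ∃ C > (0 : ℝ), ∀ (x₀ : EuclideanSpace ℝ (Fin n)) (r : ℝ), 0 < r →
      ∀ x ∈ ball x₀ r, ∀ t : ℝ, 0 < t →
        ∫ z in (ball x₀ (2 * r))ᶜ, |K t x z| * |f z - avgBall n f x₀ r|
          ≤ C * (t / r) ^ β * M := by
  classical
  set κ : ℝ := (volume (ball (0 : EuclideanSpace ℝ (Fin n)) 1)).toReal with hκdef
  have hκ : 0 < κ := kappa_pos hn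
  -- geometric ratio
  set q : ℝ := (2 : ℝ) ^ (-β) with hqdef
  have hq0 : 0 < q := Real.rpow_pos_of_pos two_pos _
  have hq1 : q < 1 := by
    rw [hqdef]
    exact Real.rpow_lt_one_of_one_lt_of_neg one_lt_two (by linarith)
  -- the summable weight
  have hw_summable : Summable (fun k : ℕ => (1 + (k + 2) * 2 ^ n) * q ^ (k + 1)) := by
    have h1 : Summable fun k : ℕ => (k : ℝ) * q ^ k := by
      simpa using summable_pow_mul_geometric_of_norm_lt_one 1
        (r := q) (by rw [Real.norm_eq_abs, abs_of_pos hq0]; exact hq1)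
    have h2 : Summable fun k : ℕ => q ^ k := summable_geometric_of_lt_one hq0.le hq1
    have : Summable fun k : ℕ =>
        (q * (1 + 2 * 2 ^ n)) * q ^ k + (q * 2 ^ n) * ((k : ℝ) * q ^ k) :=
      (h2.mul_left _).add (h1.mul_left _)
    refine this.congr fun k => ?_
    push_cast
    ring
  set S : ℝ := ∑' k : ℕ, (1 + (k + 2) * 2 ^ n) * q ^ (k + 1) with hSdef
  have hS : 0 < S := by
    refine Summable.tsum_pos hw_summable (fun k => by positivity) 0 (by positivity)
  refine ⟨C₀ * 2 ^ ((n : ℝ) + β) * κ * 2 ^ n * S, by positivity, ?_⟩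
  intro x₀ r hr x hx t ht
  set c : ℝ := avgBall n f x₀ r with hcdef
  set a : ℝ := (n : ℝ) + β with hadef
  have ha : 0 < a := by positivity
  set C : ℝ := C₀ * 2 ^ ((n : ℝ) + β) * κ * 2 ^ n * S with hCdef
  have hRHS0 : 0 ≤ C * (t / r) ^ β * M := by
    have : (0:ℝ) < C := by rw [hCdef]; positivity
    have h2 : (0:ℝ) ≤ (t / r) ^ β := Real.rpow_nonneg (by positivity) _
    positivity
  -- measurability of the integrand
  have hKz : Measurable fun z => K t x z := by
    have : Measurable fun z : EuclideanSpace ℝ (Fin n) =>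
        ((t, x, z) : ℝ × EuclideanSpace ℝ (Fin n) × EuclideanSpace ℝ (Fin n)) :=
      measurable_const.prodMk (measurable_const.prodMk measurable_id)
    exact hKmeas.comp this
  have hmeas : AEStronglyMeasurable
      (fun z => |K t x z| * |f z - c|)
      (volume.restrict (ball x₀ (2 * r))ᶜ) := by
    have habs : AEStronglyMeasurable (fun z => |f z - c|) volume := by
      simpa [Real.norm_eq_abs] using
        (hf.aestronglyMeasurable.sub (aestronglyMeasurable_const (b := c))).norm
    exact ((hKz.abs.aestronglyMeasurable).mul habs).restrict
  -- rewrite the integral via lintegral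
  have hnn : 0 ≤ᵐ[volume.restrict (ball x₀ (2 * r))ᶜ]
      fun z => |K t x z| * |f z - c| :=
    Filter.Eventually.of_forall fun z => mul_nonneg (abs_nonneg _) (abs_nonneg _)
  rw [integral_eq_lintegral_of_nonneg_ae hnn hmeas]
  refine ENNReal.toReal_le_of_le_ofReal hRHS0 ?_
  -- pointwise bound by the radial majorant
  set c₁ : ℝ := C₀ * t ^ β * 2 ^ a with hc₁def
  have hc₁ : 0 ≤ c₁ := by positivity
  have hpt : ∀ z ∈ (ball x₀ (2 * r))ᶜ,
      |K t x z| * |f z - c| ≤ c₁ * ((dist z x₀) ^ (-a) * |f z - c|) := by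
    intro z hz
    have hD : 2 * r ≤ dist z x₀ := by
      simpa [mem_ball, not_lt, dist_comm] using hz
    have hDpos : 0 < dist z x₀ := lt_of_lt_of_le (by linarith) hD
    have hd : dist z x₀ / 2 ≤ dist x z := by
      have h1 : dist x x₀ < r := mem_ball.mp hx
      have h2 : dist z x₀ ≤ dist z x + dist x x₀ := dist_triangle z x x₀
      have h3 : dist z x = dist x z := dist_comm z x
      linarith
    have hdpos : 0 < dist x z := lt_of_lt_of_le (by linarith) hd
    have hk1 : (t + dist x z) ^ (-a) ≤ (dist x z) ^ (-a) :=
      Real.rpow_le_rpow_of_nonpos hdpos (by linarith) (by linarith)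
    have hk2 : (dist x z) ^ (-a) ≤ (dist z x₀ / 2) ^ (-a) :=
      Real.rpow_le_rpow_of_nonpos (by linarith) hd (by linarith)
    have hk3 : (dist z x₀ / 2) ^ (-a) = 2 ^ a * (dist z x₀) ^ (-a) := by
      rw [Real.div_rpow hDpos.le (by norm_num : (0:ℝ) ≤ 2),
        div_eq_mul_inv, ← Real.rpow_neg (by norm_num : (0:ℝ) ≤ 2), neg_neg]
      ring
    have hK := hKsize t x z ht
    calc |K t x z| * |f z - c|
        ≤ (C₀ * t ^ β * (t + dist x z) ^ (-a)) * |f z - c| :=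
          mul_le_mul_of_nonneg_right hK (abs_nonneg _)
      _ ≤ (C₀ * t ^ β * (2 ^ a * (dist z x₀) ^ (-a))) * |f z - c| := by
          have hmid : (t + dist x z) ^ (-a) ≤ 2 ^ a * (dist z x₀) ^ (-a) := by
            rw [← hk3]; exact hk1.trans hk2
          exact mul_le_mul_of_nonneg_right
            (mul_le_mul_of_nonneg_left hmid (by positivity)) (abs_nonneg _)
      _ = c₁ * ((dist z x₀) ^ (-a) * |f z - c|) := by rw [hc₁def]; ring
  -- annuli
  set A : ℕ → Set (EuclideanSpace ℝ (Fin n)) :=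
    fun k => ball x₀ (2 ^ (k + 2) * r) \ ball x₀ (2 ^ (k + 1) * r) with hAdef
  have hAmeas : ∀ k, MeasurableSet (A k) :=
    fun k => measurableSet_ball.diff measurableSet_ball
  have hcover : (ball x₀ (2 * r))ᶜ ⊆ ⋃ k, A k := by
    have main : ∀ m : ℕ, ∀ z : EuclideanSpace ℝ (Fin n),
        dist z x₀ < 2 ^ (m + 2) * r → 2 * r ≤ dist z x₀ → z ∈ ⋃ k, A k := by
      intro m
      induction m with
      | zero =>
        intro z h1 h2
        refine mem_iUnion.mpr ⟨0, ?_, ?_⟩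
        · rw [mem_ball]; exact h1
        · rw [mem_ball, not_lt]
          norm_num
          linarith
      | succ m ih =>
        intro z h1 h2
        by_cases hc : dist z x₀ < 2 ^ (m + 2) * r
        · exact ih z hc h2
        · refine mem_iUnion.mpr ⟨m + 1, ?_, ?_⟩
          · rw [mem_ball]; exact h1
          · rw [mem_ball, not_lt]; exact not_lt.mp hc
    intro z hz
    have hD : 2 * r ≤ dist z x₀ := by
      simpa [mem_ball, not_lt] using hz
    obtain ⟨m, hm⟩ := pow_unbounded_of_one_lt (dist z x₀ / r) one_lt_two
    have hm' : dist z x₀ < 2 ^ m * r := by rwa [div_lt_iff₀ hr] at hm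
    have hmono : (2:ℝ) ^ m * r ≤ 2 ^ (m + 2) * r :=
      mul_le_mul_of_nonneg_right (pow_le_pow_right₀ one_le_two (by omega)) hr.le
    exact main m z (lt_of_lt_of_le hm' hmono) hD
  -- main chain of inequalities in ℝ≥0∞
  have step1 : (∫⁻ z in (ball x₀ (2 * r))ᶜ, ENNReal.ofReal (|K t x z| * |f z - c|))
      ≤ ENNReal.ofReal c₁ *
        ∫⁻ z in (ball x₀ (2 * r))ᶜ, ENNReal.ofReal ((dist z x₀) ^ (-a) * |f z - c|) := by
    rw [← lintegral_const_mul' _ _ ENNReal.ofReal_ne_top]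
    refine setLIntegral_mono' measurableSet_ball.compl fun z hz => ?_
    rw [← ENNReal.ofReal_mul hc₁]
    exact ENNReal.ofReal_le_ofReal (hpt z hz)
  have step2 : (∫⁻ z in (ball x₀ (2 * r))ᶜ, ENNReal.ofReal ((dist z x₀) ^ (-a) * |f z - c|))
      ≤ ∑' k : ℕ, ∫⁻ z in A k, ENNReal.ofReal ((dist z x₀) ^ (-a) * |f z - c|) :=
    (lintegral_mono_set hcover).trans (lintegral_iUnion_le _ _)
  -- bound each annulus term
  have step3 : ∀ k : ℕ,
      (∫⁻ z in A k, ENNReal.ofReal ((dist z x₀) ^ (-a) * |f z - c|))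
        ≤ ENNReal.ofReal ((2 ^ (k + 1) * r) ^ (-a)
            * ((2 ^ (k + 2) * r) ^ n * κ * ((1 + (k + 2) * 2 ^ n) * M))) := by
    intro k
    have hrk : (0:ℝ) < 2 ^ (k + 1) * r := by positivity
    have hfirst : (∫⁻ z in A k, ENNReal.ofReal ((dist z x₀) ^ (-a) * |f z - c|))
        ≤ ENNReal.ofReal ((2 ^ (k + 1) * r) ^ (-a)) *
          ∫⁻ z in A k, ENNReal.ofReal (|f z - c|) := by
      rw [← lintegral_const_mul' _ _ ENNReal.ofReal_ne_top]
      refine setLIntegral_mono' (hAmeas k) fun z hz => ?_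
      have hD : 2 ^ (k + 1) * r ≤ dist z x₀ := by
        have := hz.2
        simpa [mem_ball, not_lt, dist_comm] using this
      have : (dist z x₀) ^ (-a) ≤ (2 ^ (k + 1) * r) ^ (-a) :=
        Real.rpow_le_rpow_of_nonpos hrk hD (by linarith)
      rw [← ENNReal.ofReal_mul (Real.rpow_nonneg hrk.le _)]
      exact ENNReal.ofReal_le_ofReal (by
        have h0 : (0:ℝ) ≤ |f z - c| := abs_nonneg _
        exact mul_le_mul_of_nonneg_right this h0)
    have hsecond : (∫⁻ z in A k, ENNReal.ofReal (|f z - c|))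
        ≤ ∫⁻ z in ball x₀ (2 ^ (k + 2) * r), ENNReal.ofReal (|f z - c|) :=
      lintegral_mono_set diff_subset
    have hthird : (∫⁻ z in ball x₀ (2 ^ (k + 2) * r), ENNReal.ofReal (|f z - c|))
        = ENNReal.ofReal (∫ z in ball x₀ (2 ^ (k + 2) * r), |f z - c|) := by
      rw [ofReal_integral_eq_lintegral_ofReal (absIntegrableOn hf c x₀ _)
        (Filter.Eventually.of_forall fun z => abs_nonneg _)]
    have hfourth : (∫ z in ball x₀ (2 ^ (k + 2) * r), |f z - c|)
        ≤ (2 ^ (k + 2) * r) ^ n * κ * ((1 + (k + 2) * 2 ^ n) * M) := by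
      have := int_bound hn hf hM hBMO x₀ hr (k + 2)
      rw [← hcdef] at this
      simpa [hκdef] using this
    calc (∫⁻ z in A k, ENNReal.ofReal ((dist z x₀) ^ (-a) * |f z - c|))
        ≤ ENNReal.ofReal ((2 ^ (k + 1) * r) ^ (-a)) *
          ∫⁻ z in A k, ENNReal.ofReal (|f z - c|) := hfirst
      _ ≤ ENNReal.ofReal ((2 ^ (k + 1) * r) ^ (-a)) *
          ENNReal.ofReal ((2 ^ (k + 2) * r) ^ n * κ * ((1 + (k + 2) * 2 ^ n) * M)) := by
          refine mul_le_mul_right ?_ _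
          exact hsecond.trans (hthird.trans_le (ENNReal.ofReal_le_ofReal hfourth))
      _ = ENNReal.ofReal ((2 ^ (k + 1) * r) ^ (-a)
            * ((2 ^ (k + 2) * r) ^ n * κ * ((1 + (k + 2) * 2 ^ n) * M))) := by
          rw [← ENNReal.ofReal_mul (Real.rpow_nonneg hrk.le _)]
  -- identify the k-th bound with the geometric weight
  have hterm : ∀ k : ℕ,
      (2 ^ (k + 1) * r) ^ (-a) * ((2 ^ (k + 2) * r) ^ n * κ * ((1 + (k + 2) * 2 ^ n) * M))
        = (κ * 2 ^ n * (r ^ (-β) * M)) * ((1 + (k + 2) * 2 ^ n) * q ^ (k + 1)) := by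
    intro k
    have h2pos : (0:ℝ) < 2 := two_pos
    have hsplit1 : ((2:ℝ) ^ (k + 1) * r) ^ (-a)
        = ((2:ℝ) ^ (k + 1)) ^ (-a) * r ^ (-a) :=
      Real.mul_rpow (by positivity) hr.le
    have hb1 : ((2:ℝ) ^ (k + 1)) ^ (-a) = (2:ℝ) ^ (((k:ℝ) + 1) * (-a)) := by
      rw [← Real.rpow_natCast (2:ℝ) (k + 1), ← Real.rpow_mul h2pos.le]
      push_cast
      ring_nf
    have hb2 : ((2:ℝ) ^ (k + 2) * r) ^ n = (2:ℝ) ^ ((k + 2) * n) * r ^ n := by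
      rw [mul_pow, ← pow_mul]
    have hr1 : r ^ (-a) * r ^ (n:ℝ) = r ^ (-β) := by
      rw [← Real.rpow_add hr]
      congr 1
      rw [hadef]; ring
    have hr2 : (r:ℝ) ^ (n:ℝ) = r ^ n := Real.rpow_natCast r n
    have h2comb : (2:ℝ) ^ (((k:ℝ) + 1) * (-a)) * (2:ℝ) ^ (((k:ℝ) + 2) * (n:ℝ))
        = (2:ℝ) ^ ((n:ℝ) + ((k:ℝ) + 1) * (-β)) := by
      rw [← Real.rpow_add h2pos]
      congr 1
      rw [hadef]; ring
    have h2split : (2:ℝ) ^ ((n:ℝ) + ((k:ℝ) + 1) * (-β))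
        = 2 ^ n * q ^ (k + 1) := by
      rw [Real.rpow_add h2pos, Real.rpow_natCast]
      congr 1
      rw [hqdef, ← Real.rpow_natCast ((2:ℝ) ^ (-β)) (k + 1),
        ← Real.rpow_mul h2pos.le]
      push_cast
      ring_nf
    have hb2' : ((2:ℝ) ^ (k + 2) * r) ^ n = (2:ℝ) ^ (((k:ℝ) + 2) * (n:ℝ)) * r ^ (n:ℝ) := by
      rw [hb2, hr2, ← Real.rpow_natCast (2:ℝ) ((k + 2) * n)]
      push_cast
      ring_nf
    calc (2 ^ (k + 1) * r) ^ (-a) * ((2 ^ (k + 2) * r) ^ n * κ * ((1 + (k + 2) * 2 ^ n) * M))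
        = (((2:ℝ) ^ (k + 1)) ^ (-a) * r ^ (-a))
          * (((2:ℝ) ^ (((k:ℝ) + 2) * (n:ℝ)) * r ^ (n:ℝ)) * κ * ((1 + (k + 2) * 2 ^ n) * M)) := by
          rw [hsplit1, hb2']
      _ = (((2:ℝ) ^ (((k:ℝ) + 1) * (-a)) * (2:ℝ) ^ (((k:ℝ) + 2) * (n:ℝ)))
          * (r ^ (-a) * r ^ (n:ℝ))) * κ * ((1 + (k + 2) * 2 ^ n) * M) := by
          rw [hb1]; ring
      _ = ((2:ℝ) ^ ((n:ℝ) + ((k:ℝ) + 1) * (-β)) * r ^ (-β)) * κ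
          * ((1 + (k + 2) * 2 ^ n) * M) := by rw [h2comb, hr1]
      _ = ((2:ℝ) ^ n * q ^ (k + 1) * r ^ (-β)) * κ * ((1 + (k + 2) * 2 ^ n) * M) := by
          rw [h2split]
      _ = (κ * 2 ^ n * (r ^ (-β) * M)) * ((1 + (k + 2) * 2 ^ n) * q ^ (k + 1)) := by ring
  -- sum up
  have hsum : (∑' k : ℕ, ENNReal.ofReal ((2 ^ (k + 1) * r) ^ (-a)
        * ((2 ^ (k + 2) * r) ^ n * κ * ((1 + (k + 2) * 2 ^ n) * M))))
      = ENNReal.ofReal ((κ * 2 ^ n * (r ^ (-β) * M)) * S) := by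
    have hrw : ∀ k : ℕ, ENNReal.ofReal ((2 ^ (k + 1) * r) ^ (-a)
          * ((2 ^ (k + 2) * r) ^ n * κ * ((1 + (k + 2) * 2 ^ n) * M)))
        = ENNReal.ofReal ((κ * 2 ^ n * (r ^ (-β) * M)) * ((1 + (k + 2) * 2 ^ n) * q ^ (k + 1))) :=
      fun k => by rw [hterm k]
    rw [tsum_congr hrw]
    rw [← ENNReal.ofReal_tsum_of_nonneg
      (fun k => by positivity) (hw_summable.mul_left _)]
    congr 1
    rw [hSdef, tsum_mul_left]
  -- put everything together
  calc (∫⁻ z in (ball x₀ (2 * r))ᶜ, ENNReal.ofReal (|K t x z| * |f z - c|))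
      ≤ ENNReal.ofReal c₁ *
        ∫⁻ z in (ball x₀ (2 * r))ᶜ, ENNReal.ofReal ((dist z x₀) ^ (-a) * |f z - c|) := step1
    _ ≤ ENNReal.ofReal c₁ *
        ∑' k : ℕ, ∫⁻ z in A k, ENNReal.ofReal ((dist z x₀) ^ (-a) * |f z - c|) :=
        mul_le_mul_right step2 _
    _ ≤ ENNReal.ofReal c₁ *
        ∑' k : ℕ, ENNReal.ofReal ((2 ^ (k + 1) * r) ^ (-a)
          * ((2 ^ (k + 2) * r) ^ n * κ * ((1 + (k + 2) * 2 ^ n) * M))) :=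
        mul_le_mul_right (ENNReal.tsum_le_tsum step3) _
    _ = ENNReal.ofReal c₁ * ENNReal.ofReal ((κ * 2 ^ n * (r ^ (-β) * M)) * S) := by rw [hsum]
    _ = ENNReal.ofReal (c₁ * ((κ * 2 ^ n * (r ^ (-β) * M)) * S)) :=
        (ENNReal.ofReal_mul hc₁).symm
    _ ≤ ENNReal.ofReal (C * (t / r) ^ β * M) := by
        refine ENNReal.ofReal_le_ofReal (le_of_eq ?_)
        rw [hc₁def, hCdef]
        have htr : (t / r) ^ β = t ^ β * r ^ (-β) := by
          rw [div_eq_mul_inv, Real.mul_rpow ht.le (inv_nonneg.mpr hr.le),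
            Real.inv_rpow hr.le, ← Real.rpow_neg hr.le]
        rw [htr, hadef]
        ring
end
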